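/- Let R ≥ 1/2 and fix either sign ±. For every complex-valued f ∈ C^∞([−R,R]) one has the dissipativity estimate Re (L_± f | f)_{L²(𝔹_R, h_±')} ≤ (1/2) ‖f‖²_{L²(𝔹_R, h_±')}. -/

import Mathlib

open Real MeasureTheory

/-- The height function `h(y) = √(2 + y²) − 2`. -/
noncomputable def hfun (y : ℝ) : ℝ := Real.sqrt (2 + y ^ 2) - 2

/-- The vector field `L_± f(y) = −((y ± h(y))/(1 ± h'(y))) f'(y)` acting on
complex-valued functions; the sign is encoded by `σ ∈ {1, −1}`. -/
noncomputable def LopC (σ : ℝ) (f : ℝ → ℂ) : ℝ → ℂ :=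
  fun y => -((((y + σ * hfun y) / (1 + σ * deriv hfun y) : ℝ)) : ℂ) * deriv f y

lemma hfun_hasDerivAt (y : ℝ) :
    HasDerivAt hfun (y / Real.sqrt (2 + y ^ 2)) y := by
  have h0 : (0:ℝ) < 2 + y ^ 2 := by positivity
  have h1 : HasDerivAt (fun y : ℝ => 2 + y ^ 2) (2 * y) y := by
    simpa using (hasDerivAt_pow 2 y).const_add (2:ℝ)
  have h2 := (Real.hasDerivAt_sqrt h0.ne').comp y h1
  have h3 := h2.sub_const (2:ℝ)
  refine (show HasDerivAt hfun _ y from h3).congr_deriv ?_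
  have hs : Real.sqrt (2 + y ^ 2) ≠ 0 := (Real.sqrt_pos.2 h0).ne'
  field_simp

lemma deriv_hfun (y : ℝ) : deriv hfun y = y / Real.sqrt (2 + y ^ 2) :=
  (hfun_hasDerivAt y).deriv

lemma contDiff_hfun : ContDiff ℝ (⊤ : ℕ∞) hfun := by
  have h : ContDiff ℝ (⊤ : ℕ∞) fun y : ℝ => Real.sqrt (2 + y ^ 2) := by
    rw [contDiff_iff_contDiffAt]
    intro y
    have h0 : (2 + y ^ 2 : ℝ) ≠ 0 := by positivity
    exact (Real.contDiffAt_sqrt h0).comp y (by fun_prop)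
  exact h.sub contDiff_const

lemma fac_pos (σ : ℝ) (hσ : σ = 1 ∨ σ = -1) (y : ℝ) :
    0 < 1 + σ * deriv hfun y := by
  have h0 : (0:ℝ) < 2 + y ^ 2 := by positivity
  have hs : 0 < Real.sqrt (2 + y ^ 2) := Real.sqrt_pos.2 h0
  have hsq : Real.sqrt (2 + y ^ 2) ^ 2 = 2 + y ^ 2 := Real.sq_sqrt h0.le
  have habs : |y| < Real.sqrt (2 + y ^ 2) := by
    nlinarith [abs_nonneg y, sq_abs y]
  have h1 : |deriv hfun y| < 1 := by
    rw [deriv_hfun, abs_div, abs_of_pos hs, div_lt_one hs]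
    exact habs
  rcases hσ with h | h <;> rw [h] <;> cases' abs_lt.1 h1 with hl hr <;> nlinarith

lemma hfun_le (R : ℝ) (hR : 1 / 2 ≤ R) : hfun R ≤ R := by
  have h0 : (0:ℝ) ≤ 2 + R ^ 2 := by positivity
  have h1 : Real.sqrt (2 + R ^ 2) ≤ R + 2 := by
    rw [show (R + 2 : ℝ) = Real.sqrt ((R + 2) ^ 2) by
      rw [Real.sqrt_sq (by linarith)]]
    exact Real.sqrt_le_sqrt (by nlinarith)
  simp only [hfun]
  linarith

lemma neg_le_hfun (R : ℝ) (hR : 1 / 2 ≤ R) : -R ≤ hfun R := by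
  have h0 : (0:ℝ) ≤ 2 + R ^ 2 := by positivity
  have hs : 0 ≤ Real.sqrt (2 + R ^ 2) := Real.sqrt_nonneg _
  have hsq : Real.sqrt (2 + R ^ 2) ^ 2 = 2 + R ^ 2 := Real.sq_sqrt h0
  have : 2 - R ≤ Real.sqrt (2 + R ^ 2) := by nlinarith
  simp only [hfun]
  linarith

theorem dissipativity (R : ℝ) (hR : 1 / 2 ≤ R) (σ : ℝ) (hσ : σ = 1 ∨ σ = -1)
    (f : ℝ → ℂ) (hf : ContDiff ℝ (⊤ : ℕ∞) f) :
    (∫ y in Set.Ioo (-R) R,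
        LopC σ f y * (starRingEnd ℂ) (f y) * (((1 + σ * deriv hfun y : ℝ)) : ℂ)).re
      ≤ (1 / 2) * ∫ y in Set.Ioo (-R) R, ‖f y‖ ^ 2 * (1 + σ * deriv hfun y) := by
  have hRR : -R ≤ R := by linarith
  have hcpos : ∀ y, 0 < 1 + σ * deriv hfun y := fac_pos σ hσ
  have hcne : ∀ y, (1 + σ * deriv hfun y : ℝ) ≠ 0 := fun y => (hcpos y).ne'
  -- continuity facts
  have hcont_dh : Continuous (deriv hfun) := contDiff_hfun.continuous_deriv (by exact_mod_cast le_top)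
  have hcont_c : Continuous fun y => 1 + σ * deriv hfun y := by fun_prop
  have hcont_h : Continuous hfun := contDiff_hfun.continuous
  have hcont_f' : Continuous (deriv f) := hf.continuous_deriv (by exact_mod_cast le_top)
  have hfc : Continuous f := hf.continuous
  have hcont_L : Continuous (LopC σ f) := by
    apply Continuous.mul _ hcont_f'
    apply Continuous.neg
    apply Complex.continuous_ofReal.comp
    exact (by fun_prop : Continuous fun y : ℝ => y + σ * hfun y).div hcont_c hcne
  -- the complex integrand and its integrability
  set F : ℝ → ℂ := fun y =>
    LopC σ f y * (starRingEnd ℂ) (f y) * (((1 + σ * deriv hfun y : ℝ)) : ℂ) with hF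
  have hcont_F : Continuous F := by
    apply ((hcont_L.mul (Complex.continuous_conj.comp hfc)).mul _)
    exact Complex.continuous_ofReal.comp hcont_c
  have hintF : IntegrableOn F (Set.Ioo (-R) R) :=
    (hcont_F.integrableOn_Icc).mono_set Set.Ioo_subset_Icc_self
  -- derivative of g = ‖f‖²
  set g : ℝ → ℝ := fun y => ‖f y‖ ^ 2 with hg
  set g' : ℝ → ℝ := fun y => 2 * (deriv f y * (starRingEnd ℂ) (f y)).re with hg'
  have hfd : ∀ y, HasDerivAt f (deriv f y) y := fun y =>
    (hf.differentiable (by simp) y).hasDerivAt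
  have hgd : ∀ y, HasDerivAt g (g' y) y := by
    intro y
    have h1 : HasDerivAt (fun y => f y * (starRingEnd ℂ) (f y))
        (deriv f y * (starRingEnd ℂ) (f y) + f y * (starRingEnd ℂ) (deriv f y)) y :=
      (hfd y).mul ((hfd y).star)
    have h2 : HasDerivAt (fun y => (f y * (starRingEnd ℂ) (f y)).re)
        (deriv f y * (starRingEnd ℂ) (f y) + f y * (starRingEnd ℂ) (deriv f y)).re y :=
      (Complex.reCLM.hasFDerivAt.comp_hasDerivAt y h1)
    have heq : (fun y => (f y * (starRingEnd ℂ) (f y)).re) = g := by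
      funext z
      simp [hg, Complex.mul_conj, Complex.normSq_eq_norm_sq,
        ← Complex.ofReal_pow]
    have hval : (deriv f y * (starRingEnd ℂ) (f y) + f y * (starRingEnd ℂ) (deriv f y)).re
        = g' y := by
      simp [hg', Complex.add_re, Complex.mul_re, Complex.conj_re, Complex.conj_im]
      ring
    rw [heq, hval] at h2
    exact h2
  -- derivative of φ = y + σ h(y)
  set φ : ℝ → ℝ := fun y => y + σ * hfun y with hφ
  have hφd : ∀ y, HasDerivAt φ (1 + σ * deriv hfun y) y := by
    intro y
    have := ((hfun_hasDerivAt y).const_mul σ).const_add y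
    have h2 := (hasDerivAt_id' y).add (((hfun_hasDerivAt y).const_mul σ))
    rw [deriv_hfun]; exact h2
  -- pointwise identity
  have hpt : ∀ y, (F y).re = -(1/2) * (φ y * g' y) := by
    intro y
    have hkey : F y = ((-(φ y) : ℝ) : ℂ) * (deriv f y * (starRingEnd ℂ) (f y)) := by
      simp only [hF, LopC, hφ]
      push_cast
      have : ((1:ℂ) + σ * deriv hfun y) ≠ 0 := by
        exact_mod_cast fun h => hcne y (by exact_mod_cast h)
      field_simp
    rw [hkey, Complex.re_ofReal_mul]
    simp only [hg']
    ring
  -- rewrite the LHS as a real integral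
  have hre : (∫ y in Set.Ioo (-R) R, F y).re
      = ∫ y in Set.Ioo (-R) R, (F y).re := by
    simpa using (integral_re hintF).symm
  -- interval-integrability
  have hiu' : IntervalIntegrable (fun y => 1 + σ * deriv hfun y) volume (-R) R :=
    hcont_c.intervalIntegrable _ _
  have hiv' : IntervalIntegrable g' volume (-R) R := by
    apply Continuous.intervalIntegrable
    fun_prop
  -- integration by parts
  have hparts := intervalIntegral.integral_mul_deriv_eq_deriv_mul
    (u := φ) (u' := fun y => 1 + σ * deriv hfun y) (v := g) (v' := g')
    (fun y _ => hφd y) (fun y _ => hgd y) hiu' hiv' (a := -R) (b := R)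
  -- relate set integrals over Ioo with interval integrals
  have hIoo1 : ∫ y in Set.Ioo (-R) R, (F y).re
      = -(1/2) * ∫ y in (-R)..R, φ y * g' y := by
    rw [intervalIntegral.integral_of_le hRR, integral_Ioc_eq_integral_Ioo,
      ← MeasureTheory.integral_const_mul]
    congr 1
    funext y
    exact hpt y
  have hIoo2 : ∫ y in Set.Ioo (-R) R, ‖f y‖ ^ 2 * (1 + σ * deriv hfun y)
      = ∫ y in (-R)..R, (1 + σ * deriv hfun y) * g y := by
    rw [intervalIntegral.integral_of_le hRR, integral_Ioc_eq_integral_Ioo]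
    congr 1
    funext y
    simp [hg]; ring
  -- boundary term sign
  have hEven : hfun (-R) = hfun R := by simp [hfun]
  have hφR : 0 ≤ φ R := by
    have h1 := hfun_le R hR
    have h2 := neg_le_hfun R hR
    rcases hσ with h | h <;> simp only [hφ, h] <;> nlinarith
  have hφnR : φ (-R) ≤ 0 := by
    have h1 := hfun_le R hR
    have h2 := neg_le_hfun R hR
    rcases hσ with h | h <;> simp only [hφ, h, hEven] <;> nlinarith
  have hgnn : ∀ y, 0 ≤ g y := fun y => by positivity
  have hbd : φ (-R) * g (-R) ≤ φ R * g R :=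
    le_trans (mul_nonpos_of_nonpos_of_nonneg hφnR (hgnn _))
      (mul_nonneg hφR (hgnn _))
  -- put everything together
  beta_reduce at hparts
  rw [hre, hIoo1, hIoo2, hparts]
  set I := ∫ (x : ℝ) in (-R)..R, (1 + σ * deriv hfun x) * g x with hI
  clear_value I
  have hsub : 0 ≤ φ R * g R - φ (-R) * g (-R) := by linarith
  have hrw : -(1/2 : ℝ) * (φ R * g R - φ (-R) * g (-R) - I)
      = 1/2 * I - 1/2 * (φ R * g R - φ (-R) * g (-R)) := by ring
  rw [hrw]
  exact sub_le_self _ (mul_nonneg (by norm_num) hsub)
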